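/- Let p : F → E be a connected covering of directed graphs and v ∈ F⁰. Then the number of sheets of the covering, i.e., the cardinality of each vertex fibre p⁻¹(u) for u ∈ E⁰, equals the index of p∗π₁(F, v) in π₁(E, p(v)). -/

import Mathlib

/-- A directed graph `E = (E⁰, E¹, r, s)`. -/
structure Digraph' : Type 1 where
  V : Type
  E : Type
  r : E → V
  s : E → V

namespace Digraph'

/-- A step in a walk: an edge traversed forwards (`true`) or backwards (`false`). -/
abbrev Step (X : Digraph') : Type := X.E × Bool

def stepSrc (X : Digraph') (p : X.Step) : X.V := if p.2 then X.s p.1 else X.r p.1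

def stepTgt (X : Digraph') (p : X.Step) : X.V := if p.2 then X.r p.1 else X.s p.1

/-- `X.IsWalk u v l`: `l` is a walk from `u` to `v`. -/
def IsWalk (X : Digraph') : X.V → X.V → List X.Step → Prop
  | u, v, [] => u = v
  | u, v, p :: l => X.stepSrc p = u ∧ X.IsWalk (X.stepTgt p) v l

/-- A walk is reduced if it contains no subwalk `e e⁻¹` or `e⁻¹ e`. -/
def Reduced (X : Digraph') (l : List X.Step) : Prop :=
  List.Chain' (fun p q => ¬(p.1 = q.1 ∧ p.2 = !q.2)) l

/-- The reverse of a walk, traversing it backwards and inverting each edge. -/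
def winv (X : Digraph') (l : List X.Step) : List X.Step :=
  (l.map fun p => (p.1, !p.2)).reverse

open Classical in
/-- The reduction of a walk: repeatedly delete adjacent pairs `e e⁻¹`, `e⁻¹ e`. -/
noncomputable def red (X : Digraph') : List X.Step → List X.Step
  | [] => []
  | p :: l =>
    match X.red l with
    | [] => [p]
    | q :: m => if p.1 = q.1 ∧ p.2 = !q.2 then m else p :: q :: m

/-- The reduced loops in `X` based at `u`; the carrier of `π₁(X, u)`. -/
abbrev Loop (X : Digraph') (u : X.V) : Type :=
  {l : List X.Step // X.IsWalk u u l ∧ X.Reduced l}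

/-- `X` is connected: there is a walk between any two vertices. -/
def Connected (X : Digraph') : Prop := ∀ u v : X.V, ∃ l, X.IsWalk u v l

end Digraph'

/-- A morphism of directed graphs. -/
structure Digraph'.Hom (F E : Digraph') where
  vmap : F.V → E.V
  emap : F.E → E.E
  hr : ∀ e, E.r (emap e) = vmap (F.r e)
  hs : ∀ e, E.s (emap e) = vmap (F.s e)

/-- The action of a graph morphism on walks. -/
def Digraph'.Hom.wmap {F E : Digraph'} (p : Digraph'.Hom F E) (l : List F.Step) :
    List E.Step :=
  l.map fun q => (p.emap q.1, q.2)

/-- A covering of directed graphs: a surjective morphism restricting to bijections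
on incoming and outgoing edge sets at each vertex. -/
structure Digraph'.IsCovering {F E : Digraph'} (p : Digraph'.Hom F E) : Prop where
  vsurj : Function.Surjective p.vmap
  esurj : Function.Surjective p.emap
  rbij : ∀ v : F.V, Set.BijOn p.emap {e | F.r e = v} {e | E.r e = p.vmap v}
  sbij : ∀ v : F.V, Set.BijOn p.emap {e | F.s e = v} {e | E.s e = p.vmap v}

open Digraph'
namespace Digraph'

variable {X : Digraph'}

open Classical in
/-- One reduction step: prepend `p` to an (already reduced) list, cancelling if possible. -/
noncomputable def rstep (X : Digraph') (p : X.Step) : List X.Step → List X.Step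
  | [] => [p]
  | q :: m => if p.1 = q.1 ∧ p.2 = !q.2 then m else p :: q :: m

lemma red_cons (p : X.Step) (l : List X.Step) :
    X.red (p :: l) = X.rstep p (X.red l) := by
  cases h : X.red l with
  | nil => unfold red; rw [h]; rfl
  | cons q m => unfold red; rw [h]; rfl

lemma rstep_nil (p : X.Step) : X.rstep p [] = [p] := rfl

open Classical in
lemma rstep_cons (p q : X.Step) (m : List X.Step) :
    X.rstep p (q :: m) = if p.1 = q.1 ∧ p.2 = !q.2 then m else p :: q :: m := rfl

lemma reduced_red (l : List X.Step) : X.Reduced (X.red l) := by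
  induction l with
  | nil => exact List.isChain_nil
  | cons p l ih =>
    rw [red_cons]
    cases h : X.red l with
    | nil => exact List.isChain_singleton p
    | cons q m =>
      rw [h] at ih
      by_cases hc : p.1 = q.1 ∧ p.2 = !q.2
      · rw [rstep_cons, if_pos hc]
        exact ih.tail
      · rw [rstep_cons, if_neg hc]
        exact List.isChain_cons_cons.mpr ⟨hc, ih⟩

lemma red_reduced {l : List X.Step} (h : X.Reduced l) : X.red l = l := by
  induction l with
  | nil => rfl
  | cons p l ih =>
    rw [red_cons, ih h.tail]
    cases l with
    | nil => rfl
    | cons q m =>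
      rw [rstep_cons, if_neg (List.isChain_cons_cons.mp h).1]

lemma red_walk : ∀ {l : List X.Step} {u v : X.V}, X.IsWalk u v l → X.IsWalk u v (X.red l) := by
  intro l
  induction l with
  | nil => intro u v h; exact h
  | cons p l ih =>
    intro u v h
    obtain ⟨hs, hw⟩ := h
    rw [red_cons]
    have hred := ih hw
    cases h' : X.red l with
    | nil =>
      rw [h'] at hred
      exact ⟨hs, hred⟩
    | cons q m =>
      rw [h'] at hred
      obtain ⟨hq, hw'⟩ := hred
      by_cases hc : p.1 = q.1 ∧ p.2 = !q.2
      · rw [rstep_cons, if_pos hc]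
        have hq2 : q.2 = !p.2 := by rw [hc.2, Bool.not_not]
        have htq : X.stepTgt q = u := by
          rw [← hs]
          unfold stepTgt stepSrc
          rw [← hc.1, hq2]
          cases p.2 <;> simp
        rwa [htq] at hw'
      · rw [rstep_cons, if_neg hc]
        exact ⟨hs, hq, hw'⟩

lemma walk_append : ∀ {l m : List X.Step} {u v w : X.V},
    X.IsWalk u v l → X.IsWalk v w m → X.IsWalk u w (l ++ m) := by
  intro l
  induction l with
  | nil => intro m u v w h hm; cases h; exact hm
  | cons p l ih =>
    rintro m u v w ⟨hs, hw⟩ hm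
    exact ⟨hs, ih hw hm⟩

lemma walk_tgt_unique : ∀ {l : List X.Step} {u v v' : X.V},
    X.IsWalk u v l → X.IsWalk u v' l → v = v' := by
  intro l
  induction l with
  | nil => intro u v v' h h'; rw [← h, ← h']
  | cons p l ih =>
    rintro u v v' ⟨_, hw⟩ ⟨_, hw'⟩
    exact ih hw hw'

lemma winv_nil : X.winv [] = [] := rfl

lemma winv_cons (p : X.Step) (l : List X.Step) :
    X.winv (p :: l) = X.winv l ++ [(p.1, !p.2)] := by
  simp [winv]

lemma winv_append (l m : List X.Step) : X.winv (l ++ m) = X.winv m ++ X.winv l := by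
  simp [winv]

lemma winv_winv (l : List X.Step) : X.winv (X.winv l) = l := by
  unfold winv
  rw [List.map_reverse, List.reverse_reverse, List.map_map]
  have h : ((fun p : X.Step => (p.1, !p.2)) ∘ fun p : X.Step => (p.1, !p.2)) = id := by
    funext q; simp
  rw [h, List.map_id]

lemma winv_walk : ∀ {l : List X.Step} {u v : X.V},
    X.IsWalk u v l → X.IsWalk v u (X.winv l) := by
  intro l
  induction l with
  | nil => intro u v h; exact h.symm
  | cons p l ih =>
    rintro u v ⟨hs, hw⟩
    rw [winv_cons]
    refine walk_append (ih hw) ?_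
    refine ⟨?_, ?_⟩
    · show X.stepSrc (p.1, !p.2) = X.stepTgt p
      unfold stepSrc stepTgt
      cases p.2 <;> simp
    · show X.stepTgt (p.1, !p.2) = u
      rw [← hs]
      unfold stepSrc stepTgt
      cases p.2 <;> simp

lemma winv_reduced {l : List X.Step} (h : X.Reduced l) : X.Reduced (X.winv l) := by
  unfold Reduced winv at *
  change List.IsChain _ _ at h ⊢
  rw [List.isChain_reverse, List.isChain_map]
  refine h.imp ?_
  intro a b hab
  simp only [flip]
  intro ⟨h1, h2⟩
  exact hab ⟨h1.symm, by simp only [Bool.not_not] at h2; rw [h2]⟩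

lemma red_append_red (l m : List X.Step) : X.red (l ++ X.red m) = X.red (l ++ m) := by
  induction l with
  | nil => simpa using red_reduced (reduced_red m)
  | cons p l ih => simp only [List.cons_append, red_cons, ih]

lemma rstep_rstep {p q : X.Step} (hpq : p.1 = q.1 ∧ p.2 = !q.2) {x : List X.Step}
    (hx : X.Reduced x) : X.rstep p (X.rstep q x) = x := by
  cases x with
  | nil =>
    rw [rstep_nil, rstep_cons, if_pos hpq]
  | cons r y =>
    by_cases hqr : q.1 = r.1 ∧ q.2 = !r.2
    · have hp1 : p.1 = r.1 := hpq.1.trans hqr.1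
      have hp2 : p.2 = r.2 := by rw [hpq.2, hqr.2, Bool.not_not]
      have hpr : p = r := Prod.ext hp1 hp2
      rw [rstep_cons, if_pos hqr]
      cases y with
      | nil => rw [rstep_nil, hpr]
      | cons s z =>
        have hrs : ¬(r.1 = s.1 ∧ r.2 = !s.2) := (List.isChain_cons_cons.mp hx).1
        have hps : ¬(p.1 = s.1 ∧ p.2 = !s.2) := by rw [hp1, hp2]; exact hrs
        rw [rstep_cons, if_neg hps, hpr]
    · rw [rstep_cons, if_neg hqr, rstep_cons, if_pos hpq]

lemma red_red_append (l m : List X.Step) : X.red (X.red l ++ m) = X.red (l ++ m) := by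
  induction l with
  | nil => rfl
  | cons p l ih =>
    rw [List.cons_append, red_cons, red_cons, ← ih]
    cases h : X.red l with
    | nil =>
      rw [rstep_nil, List.singleton_append, red_cons, List.nil_append]
    | cons q m₂ =>
      by_cases hc : p.1 = q.1 ∧ p.2 = !q.2
      · rw [rstep_cons, if_pos hc, List.cons_append, red_cons]
        exact (rstep_rstep hc (reduced_red _)).symm
      · rw [rstep_cons, if_neg hc, List.cons_append, red_cons]

lemma red_cancel : ∀ (l k : List X.Step), X.red (l ++ (X.winv l ++ k)) = X.red k := by
  intro l
  induction l with
  | nil => intro k; rw [winv_nil]; rfl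
  | cons p l ih =>
    intro k
    have h1 : (p :: l) ++ (X.winv (p :: l) ++ k)
        = p :: (l ++ (X.winv l ++ ((p.1, !p.2) :: k))) := by
      rw [winv_cons]
      simp [List.append_assoc]
    rw [h1, red_cons, ih, red_cons]
    exact rstep_rstep (p := p) (q := (p.1, !p.2)) ⟨rfl, by simp⟩ (reduced_red k)

lemma red_mid (a b c : List X.Step) :
    X.red (a ++ (X.winv b ++ (b ++ c))) = X.red (a ++ c) := by
  have h : X.red (X.winv b ++ (b ++ c)) = X.red c := by
    have := red_cancel (X := X) (X.winv b) c
    rwa [winv_winv] at this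
  rw [← red_append_red, h, red_append_red]

/-! ### Morphism and covering lemmas -/

variable {F E : Digraph'} {p : Hom F E}

lemma wmap_nil : p.wmap [] = [] := rfl

lemma wmap_cons (q : F.Step) (l : List F.Step) :
    p.wmap (q :: l) = (p.emap q.1, q.2) :: p.wmap l := rfl

lemma wmap_append (l m : List F.Step) : p.wmap (l ++ m) = p.wmap l ++ p.wmap m := by
  simp [Hom.wmap]

lemma wmap_winv (l : List F.Step) : p.wmap (F.winv l) = E.winv (p.wmap l) := by
  simp [Hom.wmap, winv, List.map_reverse, List.map_map, Function.comp]

lemma vmap_stepSrc (q : F.Step) : E.stepSrc (p.emap q.1, q.2) = p.vmap (F.stepSrc q) := by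
  obtain ⟨e, b⟩ := q
  cases b <;> simp [stepSrc, p.hr, p.hs]

lemma vmap_stepTgt (q : F.Step) : E.stepTgt (p.emap q.1, q.2) = p.vmap (F.stepTgt q) := by
  obtain ⟨e, b⟩ := q
  cases b <;> simp [stepTgt, p.hr, p.hs]

lemma wmap_walk : ∀ {l : List F.Step} {u v : F.V},
    F.IsWalk u v l → E.IsWalk (p.vmap u) (p.vmap v) (p.wmap l) := by
  intro l
  induction l with
  | nil => intro u v h; exact congrArg p.vmap h
  | cons q l ih =>
    rintro u v ⟨hs, hw⟩
    rw [wmap_cons]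
    refine ⟨?_, ?_⟩
    · rw [vmap_stepSrc, hs]
    · rw [vmap_stepTgt]
      exact ih hw

lemma cov_inj_src (hp : IsCovering p) {a b : F.Step} (h : F.stepSrc a = F.stepSrc b)
    (he : p.emap a.1 = p.emap b.1) (hb : a.2 = b.2) : a = b := by
  obtain ⟨e₁, b₁⟩ := a
  obtain ⟨e₂, b₂⟩ := b
  simp only at he hb
  subst hb
  cases b₁ with
  | true =>
    have h' : F.s e₁ = F.s e₂ := by simpa [stepSrc] using h
    have := (hp.sbij (F.s e₁)).injOn (by simp) (by simp [h'.symm]) he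
    rw [this]
  | false =>
    have h' : F.r e₁ = F.r e₂ := by simpa [stepSrc] using h
    have := (hp.rbij (F.r e₁)).injOn (by simp) (by simp [h'.symm]) he
    rw [this]

lemma cov_cancel (hp : IsCovering p) {a b : F.Step} (h : F.stepTgt a = F.stepSrc b)
    (he : p.emap a.1 = p.emap b.1) (hb : a.2 = !b.2) : a.1 = b.1 := by
  obtain ⟨e₁, b₁⟩ := a
  obtain ⟨e₂, b₂⟩ := b
  simp only at he hb ⊢
  subst hb
  cases b₂ with
  | true =>
    have h' : F.s e₁ = F.s e₂ := by simpa [stepTgt, stepSrc] using h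
    exact (hp.sbij (F.s e₁)).injOn (by simp) (by simp [h'.symm]) he
  | false =>
    have h' : F.r e₁ = F.r e₂ := by simpa [stepTgt, stepSrc] using h
    exact (hp.rbij (F.r e₁)).injOn (by simp) (by simp [h'.symm]) he

lemma wmap_red (hp : IsCovering p) : ∀ {l : List F.Step} {u v : F.V},
    F.IsWalk u v l → p.wmap (F.red l) = E.red (p.wmap l) := by
  intro l
  induction l with
  | nil => intros; rfl
  | cons q l ih =>
    rintro u v ⟨hs, hw⟩
    rw [wmap_cons, red_cons, red_cons, ← ih hw]
    have hred : F.IsWalk (F.stepTgt q) v (F.red l) := red_walk hw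
    cases h : F.red l with
    | nil => rfl
    | cons r m =>
      rw [h] at hred
      obtain ⟨hr, _⟩ := hred
      by_cases hc : q.1 = r.1 ∧ q.2 = !r.2
      · rw [rstep_cons, if_pos hc, wmap_cons, rstep_cons,
          if_pos ⟨congrArg p.emap hc.1, hc.2⟩]
      · have hc' : ¬((p.emap q.1, q.2).1 = (p.emap r.1, r.2).1
            ∧ (p.emap q.1, q.2).2 = !(p.emap r.1, r.2).2) := by
          intro ⟨h1, h2⟩
          exact hc ⟨cov_cancel hp hr.symm h1 h2, h2⟩
        rw [rstep_cons, if_neg hc, wmap_cons, wmap_cons, rstep_cons, if_neg hc']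

lemma lift_exists (hp : IsCovering p) : ∀ (l : List E.Step) (w : F.V) (u' : E.V),
    E.IsWalk (p.vmap w) u' l →
    ∃ (l' : List F.Step) (w' : F.V), F.IsWalk w w' l' ∧ p.wmap l' = l ∧ p.vmap w' = u' := by
  intro l
  induction l with
  | nil => intro w u' h; exact ⟨[], w, rfl, rfl, h⟩
  | cons P l ih =>
    rintro w u' ⟨hs, hw⟩
    obtain ⟨e, b⟩ := P
    cases b with
    | true =>
      have hse : E.s e = p.vmap w := by simpa [stepSrc] using hs
      obtain ⟨e', he's, he'e⟩ := (hp.sbij w).surjOn (show e ∈ {e | E.s e = p.vmap w} from hse)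
      have htgt : p.vmap (F.r e') = E.stepTgt (e, true) := by
        simp [stepTgt, ← he'e, p.hr]
      obtain ⟨l', w', hwalk, hmap, hv⟩ := ih (F.r e') u' (by rw [htgt]; exact hw)
      refine ⟨(e', true) :: l', w', ⟨?_, ?_⟩, ?_, hv⟩
      · simpa [stepSrc] using he's
      · simpa [stepTgt] using hwalk
      · rw [wmap_cons, hmap, he'e]
    | false =>
      have hse : E.r e = p.vmap w := by simpa [stepSrc] using hs
      obtain ⟨e', he's, he'e⟩ := (hp.rbij w).surjOn (show e ∈ {e | E.r e = p.vmap w} from hse)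
      have htgt : p.vmap (F.s e') = E.stepTgt (e, false) := by
        simp [stepTgt, ← he'e, p.hs]
      obtain ⟨l', w', hwalk, hmap, hv⟩ := ih (F.s e') u' (by rw [htgt]; exact hw)
      refine ⟨(e', false) :: l', w', ⟨?_, ?_⟩, ?_, hv⟩
      · simpa [stepSrc] using he's
      · simpa [stepTgt] using hwalk
      · rw [wmap_cons, hmap, he'e]

lemma lift_unique (hp : IsCovering p) : ∀ {l₁ l₂ : List F.Step} {w w₁ w₂ : F.V},
    F.IsWalk w w₁ l₁ → F.IsWalk w w₂ l₂ → p.wmap l₁ = p.wmap l₂ → l₁ = l₂ ∧ w₁ = w₂ := by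
  intro l₁
  induction l₁ with
  | nil =>
    intro l₂ w w₁ w₂ h₁ h₂ hm
    have hnil : l₂ = [] := by
      cases l₂ with
      | nil => rfl
      | cons q l => simp [Hom.wmap] at hm
    subst hnil
    exact ⟨rfl, h₁.symm.trans h₂⟩
  | cons q l ih =>
    intro l₂ w w₁ w₂ h₁ h₂ hm
    cases l₂ with
    | nil => simp [Hom.wmap] at hm
    | cons q₂ l₂' =>
      rw [wmap_cons, wmap_cons, List.cons_eq_cons] at hm
      obtain ⟨hhead, htail⟩ := hm
      rw [Prod.mk.injEq] at hhead
      obtain ⟨hs₁, hw₁⟩ := h₁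
      obtain ⟨hs₂, hw₂⟩ := h₂
      have hq : q = q₂ := cov_inj_src hp (hs₁.trans hs₂.symm) hhead.1 hhead.2
      subst hq
      obtain ⟨hl, hww⟩ := ih hw₁ hw₂ htail
      exact ⟨by rw [hl], hww⟩

lemma lift_endpoint (hp : IsCovering p) {l₁ l₂ : List F.Step} {w w₁ w₂ : F.V}
    (h₁ : F.IsWalk w w₁ l₁) (h₂ : F.IsWalk w w₂ l₂)
    (h : E.red (p.wmap l₁) = E.red (p.wmap l₂)) : w₁ = w₂ :=
  (lift_unique hp (red_walk h₁) (red_walk h₂)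
    (by rw [wmap_red hp h₁, wmap_red hp h₂, h])).2

end Digraph'

/-- the number of sheets of a connected covering, i.e. the cardinality of
each vertex fibre `p⁻¹(u)`, equals the index of `p₊π₁(F, v)` in `π₁(E, p(v))`
(the cardinality of the coset space). -/
theorem number_of_sheets_eq_index {F E : Digraph'} (p : Digraph'.Hom F E)
    (hp : Digraph'.IsCovering p) (hconn : F.Connected) (v : F.V)
    [GF : Group (F.Loop v)]
    (hGF : ∀ a b : F.Loop v, (a * b).val = F.red (a.val ++ b.val))
    [GE : Group (E.Loop (p.vmap v))]
    (hGE : ∀ a b : E.Loop (p.vmap v), (a * b).val = E.red (a.val ++ b.val))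
    (f : F.Loop v →* E.Loop (p.vmap v))
    (hf : ∀ l : F.Loop v, (f l).val = p.wmap l.val) :
    ∀ u : E.V,
      Cardinal.mk {w : F.V // p.vmap w = u} =
        Cardinal.mk (E.Loop (p.vmap v) ⧸ f.range) := by

  intro u
  classical
  -- value of the identity of `π₁(E, p v)`
  have one_val : (1 : E.Loop (p.vmap v)).val = [] := by
    set a : E.Loop (p.vmap v) := 1 with ha
    have hbprop : E.IsWalk (p.vmap v) (p.vmap v) (E.winv a.val) ∧ E.Reduced (E.winv a.val) :=
      ⟨winv_walk a.2.1, winv_reduced a.2.2⟩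
    have hab : (a * ⟨E.winv a.val, hbprop⟩).val = [] := by
      rw [hGE]
      show E.red (a.val ++ E.winv a.val) = []
      have h := red_cancel (X := E) a.val []
      rw [List.append_nil] at h
      exact h
    have h2 : (a * ⟨E.winv a.val, hbprop⟩) * (a * ⟨E.winv a.val, hbprop⟩)
        = a * ⟨E.winv a.val, hbprop⟩ := by
      apply Subtype.ext
      rw [hGE, hab]
      rfl
    have h3 : a * ⟨E.winv a.val, hbprop⟩ = 1 := mul_eq_left.mp h2
    rw [ha, ← h3]; exact hab
  -- value of inverses in `π₁(E, p v)`
  have inv_val : ∀ a : E.Loop (p.vmap v), (a⁻¹).val = E.winv a.val := by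
    intro a
    have hbprop : E.IsWalk (p.vmap v) (p.vmap v) (E.winv a.val) ∧ E.Reduced (E.winv a.val) :=
      ⟨winv_walk a.2.1, winv_reduced a.2.2⟩
    have hab : a * ⟨E.winv a.val, hbprop⟩ = 1 := by
      apply Subtype.ext
      rw [hGE, one_val]
      show E.red (a.val ++ E.winv a.val) = []
      have h := red_cancel (X := E) a.val []
      rw [List.append_nil] at h
      exact h
    rw [inv_eq_of_mul_eq_one_right hab]
  -- a fixed walk from `p v` to `u` in `E`
  obtain ⟨w₀, hw₀⟩ := hp.vsurj u
  obtain ⟨α₀, hα₀⟩ := hconn v w₀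
  have hγ₀ : E.IsWalk (p.vmap v) u (p.wmap α₀) := by
    have h := wmap_walk (p := p) hα₀
    rwa [hw₀] at h
  set γ₀ : List E.Step := p.wmap α₀ with hγ
  -- chosen reduced walks from `v` to each vertex of `F`, and their images
  set α : F.V → List F.Step := fun w => F.red (hconn v w).choose with hαdef
  have hαw : ∀ w, F.IsWalk v w (α w) := fun w => red_walk (hconn v w).choose_spec
  set β : F.V → List E.Step := fun w => p.wmap (α w) with hβ
  have hβdef : ∀ w, p.wmap (α w) = β w := fun _ => rfl
  have hβw : ∀ w, E.IsWalk (p.vmap v) (p.vmap w) (β w) := fun w => wmap_walk (hαw w)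
  have hβu : ∀ w : {w : F.V // p.vmap w = u}, E.IsWalk (p.vmap v) u (β w.val) := by
    intro w
    have h := hβw w.val
    rwa [w.2] at h
  -- the loop associated to a point of the fibre
  have gprop : ∀ w : {w : F.V // p.vmap w = u},
      E.IsWalk (p.vmap v) (p.vmap v) (E.red (γ₀ ++ E.winv (β w.val)))
        ∧ E.Reduced (E.red (γ₀ ++ E.winv (β w.val))) := fun w =>
    ⟨red_walk (walk_append hγ₀ (winv_walk (hβu w))), reduced_red _⟩
  set g : {w : F.V // p.vmap w = u} → E.Loop (p.vmap v) := fun w => ⟨_, gprop w⟩ with hg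
  have gval : ∀ w, (g w).val = E.red (γ₀ ++ E.winv (β w.val)) := fun w => rfl
  have hinvprop : ∀ w : {w : F.V // p.vmap w = u},
      E.IsWalk (p.vmap v) (p.vmap v) (E.red (β w.val ++ E.winv γ₀))
        ∧ E.Reduced (E.red (β w.val ++ E.winv γ₀)) := fun w =>
    ⟨red_walk (walk_append (hβu w) (winv_walk hγ₀)), reduced_red _⟩
  have ginv : ∀ w, ((g w)⁻¹).val = E.red (β w.val ++ E.winv γ₀) := by
    intro w
    have hmul : g w * ⟨E.red (β w.val ++ E.winv γ₀), hinvprop w⟩ = 1 := by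
      apply Subtype.ext
      rw [hGE, one_val]
      show E.red (E.red (γ₀ ++ E.winv (β w.val)) ++ E.red (β w.val ++ E.winv γ₀)) = []
      rw [red_red_append, red_append_red, List.append_assoc, red_mid]
      have h := red_cancel (X := E) γ₀ []
      rw [List.append_nil] at h
      exact h
    rw [inv_eq_of_mul_eq_one_right hmul]
  -- injectivity
  have hinj : Function.Injective
      (fun w : {w : F.V // p.vmap w = u} =>
        (QuotientGroup.mk (g w) : E.Loop (p.vmap v) ⧸ f.range)) := by
    intro w w' hww'
    have hww'' : (QuotientGroup.mk (g w) : E.Loop (p.vmap v) ⧸ f.range)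
        = QuotientGroup.mk (g w') := hww'
    have hmem : (g w)⁻¹ * g w' ∈ f.range := QuotientGroup.eq.mp hww''
    obtain ⟨c, hc⟩ := MonoidHom.mem_range.mp hmem
    have hcval : p.wmap c.val = E.red (β w.val ++ E.winv (β w'.val)) := by
      rw [← hf c, hc, hGE, ginv w, gval w', red_red_append, red_append_red,
        List.append_assoc, red_mid]
    have hl₁ : F.IsWalk v w'.val (c.val ++ α w'.val) := walk_append c.2.1 (hαw w'.val)
    have key : E.red (p.wmap (c.val ++ α w'.val)) = E.red (p.wmap (α w.val)) := by
      rw [wmap_append, hβdef w'.val, hβdef w.val, hcval, red_red_append, List.append_assoc]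
      have h := red_mid (X := E) (β w.val) (β w'.val) ([] : List E.Step)
      rwa [List.append_nil, List.append_nil] at h
    exact Subtype.ext (lift_endpoint hp hl₁ (hαw w.val) key).symm
  -- surjectivity
  have hsurj : Function.Surjective
      (fun w : {w : F.V // p.vmap w = u} =>
        (QuotientGroup.mk (g w) : E.Loop (p.vmap v) ⧸ f.range)) := by
    intro x
    obtain ⟨gE, rfl⟩ := QuotientGroup.mk_surjective x
    have hδ : E.IsWalk (p.vmap v) u (E.winv gE.val ++ γ₀) :=
      walk_append (winv_walk gE.2.1) hγ₀
    obtain ⟨l', w', hw'walk, hw'map, hw'v⟩ := lift_exists hp _ v u hδ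
    refine ⟨⟨w', hw'v⟩, ?_⟩
    have hcwalk : F.IsWalk v v (F.red (l' ++ F.winv (α w'))) :=
      red_walk (walk_append hw'walk (winv_walk (hαw w')))
    show (QuotientGroup.mk (g ⟨w', hw'v⟩) : E.Loop (p.vmap v) ⧸ f.range)
      = QuotientGroup.mk gE
    refine (QuotientGroup.eq.mpr (MonoidHom.mem_range.mpr
      ⟨⟨F.red (l' ++ F.winv (α w')), hcwalk, reduced_red _⟩, ?_⟩)).symm
    apply Subtype.ext
    have h1 : (gE⁻¹ * g ⟨w', hw'v⟩).val
        = E.red (E.winv gE.val ++ E.red (γ₀ ++ E.winv (β w'))) := by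
      rw [hGE, inv_val gE]
    rw [hf _, h1, red_append_red]
    show p.wmap (F.red (l' ++ F.winv (α w'))) = _
    rw [wmap_red hp (walk_append hw'walk (winv_walk (hαw w'))), wmap_append, wmap_winv,
      hβdef w', hw'map, List.append_assoc]
  exact Cardinal.mk_congr (Equiv.ofBijective _ ⟨hinj, hsurj⟩)
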